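/- Let D ≥ 2 be an integer with 0 < d^u ≤ D, and define ẽ_w := c̃_w / ∏_{j=1}^{D}(w + 2 − j) for integers w ≥ D − 1. Then for every integer w ≥ D − 1, ẽ_{w+1} ≤ ((d^u + w)(w + 2 − D)/((w + 2)(w + 1)))·ẽ_w and ẽ_{w+1} < ẽ_w; in particular (ẽ_w)_{w ≥ D−1} is strictly decreasing. -/

import Mathlib

/-- Let `D ≥ 2` be an integer with `0 < d^u ≤ D` and, for `w ≥ D − 1`, set
`ẽ_w := c̃_w / ∏_{j=1}^{D}(w + 2 − j)`. Then for every `w ≥ D − 1`,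
`ẽ_{w+1} ≤ ((d^u + w)(w + 2 − D)/((w + 2)(w + 1)))·ẽ_w` and `ẽ_{w+1} < ẽ_w`;
in particular `(ẽ_w)_{w ≥ D−1}` is strictly decreasing. Here `c̃_0 = c_0 > 0`
and `c̃_w = (1/w)·Σ_{r=0}^{w−1} d^u·c̃_r` for `w ≥ 1`. -/
theorem et_general_D_strict
    (du c0 : ℝ) (hdu : 0 < du) (hc0 : 0 < c0)
    (ct : ℕ → ℝ) (hct0 : ct 0 = c0)
    (hct : ∀ w : ℕ, 1 ≤ w → ct w = (1 / (w : ℝ)) * ∑ r ∈ Finset.range w, du * ct r)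
    (D : ℕ) (hD : 2 ≤ D) (hduD : du ≤ (D : ℝ))
    (et : ℕ → ℝ)
    (het : ∀ w : ℕ, D - 1 ≤ w →
      et w = ct w / ∏ j ∈ Finset.Icc 1 D, ((w : ℝ) + 2 - (j : ℝ))) :
    (∀ w : ℕ, D - 1 ≤ w →
      et (w + 1) ≤ ((du + w) * ((w : ℝ) + 2 - (D : ℝ)) / (((w : ℝ) + 2) * ((w : ℝ) + 1))) * et w
        ∧ et (w + 1) < et w) ∧
    StrictAntiOn et {w : ℕ | D - 1 ≤ w} := by
  have hsum : ∀ w : ℕ, ∑ r ∈ Finset.range w, du * ct r = (w : ℝ) * ct w := by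
    intro w
    cases w with
    | zero => simp
    | succ n =>
      have h := hct (n + 1) (by omega)
      have hne : ((n : ℝ) + 1) ≠ 0 := by positivity
      rw [h]
      push_cast
      field_simp
  have hstep : ∀ w : ℕ, ct (w + 1) = ((du + w) / ((w : ℝ) + 1)) * ct w := by
    intro w
    have h := hct (w + 1) (by omega)
    rw [Finset.sum_range_succ, hsum w] at h
    rw [h]
    have hne : ((w : ℝ) + 1) ≠ 0 := by positivity
    push_cast
    field_simp
    ring
  have hctpos : ∀ w, 0 < ct w := by
    intro w
    induction w with
    | zero => rw [hct0]; exact hc0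
    | succ n ih =>
      rw [hstep n]
      have h1 : (0 : ℝ) < du + n := by positivity
      have h2 : (0 : ℝ) < (n : ℝ) + 1 := by positivity
      exact mul_pos (div_pos h1 h2) ih
  have keyP : ∀ m : ℕ, 1 ≤ m → ∀ x : ℝ,
      (∏ j ∈ Finset.Icc 1 m, (x + 1 + 2 - (j : ℝ))) * (x + 2 - m)
        = (x + 2) * ∏ j ∈ Finset.Icc 1 m, (x + 2 - (j : ℝ)) := by
    intro m hm
    induction m, hm using Nat.le_induction with
    | base =>
      intro x
      rw [Finset.Icc_self, Finset.prod_singleton, Finset.prod_singleton]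
      push_cast
      ring
    | succ n hn ih =>
      intro x
      rw [Finset.prod_Icc_succ_top (by omega), Finset.prod_Icc_succ_top (by omega)]
      push_cast
      linear_combination (x + 1 - (n : ℝ)) * ih x
  have hPpos : ∀ w : ℕ, D - 1 ≤ w → 0 < ∏ j ∈ Finset.Icc 1 D, ((w : ℝ) + 2 - (j : ℝ)) := by
    intro w hw
    apply Finset.prod_pos
    intro j hj
    simp only [Finset.mem_Icc] at hj
    have h1 : (j : ℝ) ≤ (D : ℝ) := by exact_mod_cast hj.2
    have h2 : (D : ℝ) ≤ (w : ℝ) + 1 := by exact_mod_cast (show D ≤ w + 1 by omega)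
    linarith
  have hwDpos : ∀ w : ℕ, D - 1 ≤ w → (1 : ℝ) ≤ (w : ℝ) + 2 - D := by
    intro w hw
    have h2 : (D : ℝ) ≤ (w : ℝ) + 1 := by exact_mod_cast (show D ≤ w + 1 by omega)
    linarith
  have hkey : ∀ w : ℕ, D - 1 ≤ w →
      et (w + 1) = ((du + w) * ((w : ℝ) + 2 - (D : ℝ)) / (((w : ℝ) + 2) * ((w : ℝ) + 1))) * et w := by
    intro w hw
    have hP := hPpos w hw
    have hwD := hwDpos w hw
    have hprod := keyP D (by omega) (w : ℝ)
    rw [het (w + 1) (by omega), het w hw, hstep w]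
    push_cast
    set A := ∏ j ∈ Finset.Icc 1 D, ((w : ℝ) + 1 + 2 - (j : ℝ)) with hA
    set B := ∏ j ∈ Finset.Icc 1 D, ((w : ℝ) + 2 - (j : ℝ)) with hB
    have hApos : 0 < A := by
      have : 0 < A * ((w : ℝ) + 2 - D) := by rw [hprod]; positivity
      nlinarith
    have h1 : ((w : ℝ) + 1) ≠ 0 := by positivity
    have h2 : ((w : ℝ) + 2) ≠ 0 := by positivity
    have h3 : A ≠ 0 := ne_of_gt hApos
    have h4 : B ≠ 0 := ne_of_gt hP
    field_simp
    linear_combination (-(ct w)) * hprod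
  and_intros
  · intro w hw
    have hetpos : 0 < et w := by
      rw [het w hw]; exact div_pos (hctpos w) (hPpos w hw)
    have hratio : (du + w) * ((w : ℝ) + 2 - (D : ℝ)) / (((w : ℝ) + 2) * ((w : ℝ) + 1)) < 1 := by
      rw [div_lt_one (by positivity)]
      have h2 : (D : ℝ) ≤ (w : ℝ) + 1 := by exact_mod_cast (show D ≤ w + 1 by omega)
      have hD2 : (2 : ℝ) ≤ (D : ℝ) := by exact_mod_cast hD
      have hwD := hwDpos w hw
      nlinarith [sq_nonneg ((D : ℝ) - 1), mul_le_mul_of_nonneg_right hduD (by linarith : (0:ℝ) ≤ (w : ℝ) + 2 - D)]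
    constructor
    · exact le_of_eq (hkey w hw)
    · rw [hkey w hw]
      exact mul_lt_of_lt_one_left hetpos hratio
  · intro a ha b hb hab
    simp only [Set.mem_setOf_eq] at ha hb
    have hdec : ∀ w : ℕ, D - 1 ≤ w → et (w + 1) < et w := by
      intro w hw
      have hetpos : 0 < et w := by
        rw [het w hw]; exact div_pos (hctpos w) (hPpos w hw)
      have hratio : (du + w) * ((w : ℝ) + 2 - (D : ℝ)) / (((w : ℝ) + 2) * ((w : ℝ) + 1)) < 1 := by
        rw [div_lt_one (by positivity)]
        have h2 : (D : ℝ) ≤ (w : ℝ) + 1 := by exact_mod_cast (show D ≤ w + 1 by omega)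
        have hD2 : (2 : ℝ) ≤ (D : ℝ) := by exact_mod_cast hD
        have hwD := hwDpos w hw
        nlinarith [sq_nonneg ((D : ℝ) - 1), mul_le_mul_of_nonneg_right hduD (by linarith : (0:ℝ) ≤ (w : ℝ) + 2 - D)]
      rw [hkey w hw]
      exact mul_lt_of_lt_one_left hetpos hratio
    have key : ∀ b : ℕ, a + 1 ≤ b → et b < et a := by
      intro b hb'
      induction b, hb' using Nat.le_induction with
      | base => exact hdec a ha
      | succ n hn ih => exact lt_trans (hdec n (by omega)) ih
    exact key b hab
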